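/- The family of star bodies with continuous radial function is a closed subset of the space of all star bodies in ℝ^d equipped with the radial Attouch–Wets distance d_{AW^r}; hence it is a complete metric space in this distance. -/

import Mathlib

open scoped ENNReal

noncomputable section

/-- Radial function of a set `A ⊆ ℝ^d` in direction `θ`. -/
def radialFn {d : ℕ} (A : Set (EuclideanSpace ℝ (Fin d)))
    (θ : EuclideanSpace ℝ (Fin d)) : ℝ≥0∞ :=
  sSup (ENNReal.ofReal '' {r : ℝ | 0 ≤ r ∧ r • θ ∈ A})

/-- A star set: nonempty and closed under scaling by `t ∈ [0,1]`. -/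
def IsStarSet {d : ℕ} (A : Set (EuclideanSpace ℝ (Fin d))) : Prop :=
  A.Nonempty ∧ ∀ a ∈ A, ∀ t : ℝ, 0 ≤ t → t ≤ 1 → t • a ∈ A

/-- A star body: a radially closed star set. -/
def IsStarBody {d : ℕ} (A : Set (EuclideanSpace ℝ (Fin d))) : Prop :=
  IsStarSet A ∧ ∀ θ : EuclideanSpace ℝ (Fin d), ‖θ‖ = 1 → radialFn A θ ≠ ⊤ →
    (radialFn A θ).toReal • θ ∈ A

open scoped Classical in
/-- The radial distance from a point `x` to a star body `A`:
`0` if `x ∈ A`, and `‖x‖ - ρ_A(x/‖x‖)` otherwise. -/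
def radialDist {d : ℕ} (x : EuclideanSpace ℝ (Fin d))
    (A : Set (EuclideanSpace ℝ (Fin d))) : ℝ :=
  if x ∈ A then 0 else ‖x‖ - (radialFn A (‖x‖⁻¹ • x)).toReal

/-- The radial Attouch–Wets distance between star bodies. -/
def dAWr {d : ℕ} (A₁ A₂ : Set (EuclideanSpace ℝ (Fin d))) : ℝ :=
  ⨆ j : ℕ, min (1 / ((j : ℝ) + 1))
    (⨆ x : Metric.closedBall (0 : EuclideanSpace ℝ (Fin d)) ((j : ℝ) + 1),
      |radialDist (x : EuclideanSpace ℝ (Fin d)) A₁ -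
        radialDist (x : EuclideanSpace ℝ (Fin d)) A₂|)


section Aux
-- ## basics
variable {d : ℕ} {A B : Set (EuclideanSpace ℝ (Fin d))}

lemma IsStarSet.zero_mem (h : IsStarSet A) : (0 : EuclideanSpace ℝ (Fin d)) ∈ A := by
  obtain ⟨⟨a, ha⟩, hs⟩ := h
  simpa using hs a ha 0 le_rfl zero_le_one

lemma norm_unit {x : EuclideanSpace ℝ (Fin d)} (hx : x ≠ 0) : ‖‖x‖⁻¹ • x‖ = 1 := by
  rw [norm_smul, norm_inv, norm_norm, inv_mul_cancel₀ (norm_ne_zero_iff.2 hx)]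

lemma smul_norm_unit {x : EuclideanSpace ℝ (Fin d)} (hx : x ≠ 0) : ‖x‖ • (‖x‖⁻¹ • x) = x := by
  rw [smul_smul, mul_inv_cancel₀ (norm_ne_zero_iff.2 hx), one_smul]

lemma ofReal_le_radialFn {θ : EuclideanSpace ℝ (Fin d)} {r : ℝ} (hr : 0 ≤ r)
    (hx : r • θ ∈ A) : ENNReal.ofReal r ≤ radialFn A θ :=
  le_sSup ⟨r, ⟨hr, hx⟩, rfl⟩

lemma mem_of_radialFn_top (h : IsStarSet A) {θ : EuclideanSpace ℝ (Fin d)}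
    (htop : radialFn A θ = ⊤) {r : ℝ} (hr : 0 ≤ r) : r • θ ∈ A := by
  have : ENNReal.ofReal r < sSup (ENNReal.ofReal '' {s : ℝ | 0 ≤ s ∧ s • θ ∈ A}) := by
    rw [← radialFn, htop]; exact ENNReal.ofReal_lt_top.trans_le le_top
  obtain ⟨e, ⟨s, ⟨hs0, hsA⟩, rfl⟩, hlt⟩ := lt_sSup_iff.1 this
  have hrs : r < s := by
    by_contra hc
    exact absurd (ENNReal.ofReal_le_ofReal (not_lt.1 hc)) (not_le.2 hlt)
  have hsne : s ≠ 0 := (hr.trans_lt hrs).ne'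
  have := h.2 _ hsA (r / s) (div_nonneg hr hs0) (div_le_one_of_le₀ hrs.le hs0)
  rwa [smul_smul, div_mul_cancel₀ _ hsne] at this

lemma mem_starBody_iff (hA : IsStarBody A) {θ : EuclideanSpace ℝ (Fin d)} (hθ : ‖θ‖ = 1)
    {r : ℝ} (hr : 0 ≤ r) : r • θ ∈ A ↔ ENNReal.ofReal r ≤ radialFn A θ := by
  constructor
  · exact fun h => ofReal_le_radialFn hr h
  · intro h
    rcases eq_or_ne (radialFn A θ) ⊤ with htop | htop
    · exact mem_of_radialFn_top hA.1 htop hr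
    · have hrc : r ≤ (radialFn A θ).toReal := (ENNReal.ofReal_le_iff_le_toReal htop).1 h
      have hcA := hA.2 θ hθ htop
      rcases eq_or_lt_of_le (ENNReal.toReal_nonneg (a := radialFn A θ)) with hc0 | hc0
      · have : r = 0 := le_antisymm (by rw [← hc0] at hrc; exact hrc) hr
        rw [this, zero_smul]; exact hA.1.zero_mem
      · have := hA.1.2 _ hcA (r / (radialFn A θ).toReal) (div_nonneg hr hc0.le)
          (div_le_one_of_le₀ hrc hc0.le)
        rwa [smul_smul, div_mul_cancel₀ _ hc0.ne'] at this

lemma radialDist_zero (hA : IsStarSet A) :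
    radialDist (0 : EuclideanSpace ℝ (Fin d)) A = 0 := by
  simp [radialDist, hA.zero_mem]

lemma radialDist_of_mem {x : EuclideanSpace ℝ (Fin d)} (hx : x ∈ A) : radialDist x A = 0 := by
  simp [radialDist, hx]

lemma not_mem_facts (hA : IsStarBody A) {x : EuclideanSpace ℝ (Fin d)} (hx : x ∉ A) :
    x ≠ 0 ∧ radialFn A (‖x‖⁻¹ • x) ≠ ⊤ ∧ (radialFn A (‖x‖⁻¹ • x)).toReal < ‖x‖ := by
  have hx0 : x ≠ 0 := by rintro rfl; exact hx hA.1.zero_mem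
  have hnot : ¬ ENNReal.ofReal ‖x‖ ≤ radialFn A (‖x‖⁻¹ • x) := by
    intro h
    exact hx (by simpa [smul_norm_unit hx0] using
      (mem_starBody_iff hA (norm_unit hx0) (norm_nonneg x)).2 h)
  have hlt : radialFn A (‖x‖⁻¹ • x) < ENNReal.ofReal ‖x‖ := not_le.1 hnot
  exact ⟨hx0, hlt.ne_top, (ENNReal.lt_ofReal_iff_toReal_lt hlt.ne_top).1 hlt⟩

lemma radialDist_nonneg (hA : IsStarBody A) (x : EuclideanSpace ℝ (Fin d)) :
    0 ≤ radialDist x A := by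
  by_cases hx : x ∈ A
  · simp [radialDist, hx]
  · obtain ⟨_, _, hlt⟩ := not_mem_facts hA hx
    simp only [radialDist, hx, if_false]
    linarith

lemma radialDist_le_norm (x : EuclideanSpace ℝ (Fin d)) :
    radialDist x A ≤ ‖x‖ := by
  by_cases hx : x ∈ A
  · simp [radialDist, hx, norm_nonneg]
  · simp only [radialDist, hx, if_false]
    have := ENNReal.toReal_nonneg (a := radialFn A (‖x‖⁻¹ • x))
    linarith

lemma radialDist_smul_top (hA : IsStarBody A) {θ : EuclideanSpace ℝ (Fin d)} (hθ : ‖θ‖ = 1)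
    {r : ℝ} (hr : 0 ≤ r) (htop : radialFn A θ = ⊤) : radialDist (r • θ) A = 0 :=
  radialDist_of_mem (mem_of_radialFn_top hA.1 htop hr)

lemma radialDist_smul_eq (hA : IsStarBody A) {θ : EuclideanSpace ℝ (Fin d)} (hθ : ‖θ‖ = 1)
    {r : ℝ} (hr : 0 ≤ r) (htop : radialFn A θ ≠ ⊤) :
    radialDist (r • θ) A = max 0 (r - (radialFn A θ).toReal) := by
  rcases eq_or_lt_of_le hr with hr0 | hr0
  · rw [← hr0, zero_smul, radialDist_zero hA.1]
    have := ENNReal.toReal_nonneg (a := radialFn A θ)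
    rw [eq_comm, max_eq_left_iff]; linarith
  · have hθ0 : θ ≠ 0 := by intro h; rw [h, norm_zero] at hθ; norm_num at hθ
    have hx0 : r • θ ≠ 0 := smul_ne_zero hr0.ne' hθ0
    have hnorm : ‖r • θ‖ = r := by rw [norm_smul, hθ, Real.norm_eq_abs, abs_of_pos hr0, mul_one]
    have hunit : r⁻¹ • (r • θ) = θ := by
      rw [smul_smul, inv_mul_cancel₀ hr0.ne', one_smul]
    by_cases hx : r • θ ∈ A
    · rw [radialDist_of_mem hx, eq_comm, max_eq_left_iff, sub_nonpos]
      have := (mem_starBody_iff hA hθ hr).1 hx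
      exact (ENNReal.ofReal_le_iff_le_toReal htop).1 this
    · have hgt : (radialFn A θ).toReal < r := by
        have := (not_mem_facts hA hx).2.2
        rwa [hnorm, hunit] at this
      simp only [radialDist, hx, if_false, hnorm, hunit]
      rw [eq_comm, max_eq_right_iff.2]; linarith

lemma min_ofReal_radialFn (hA : IsStarBody A) {θ : EuclideanSpace ℝ (Fin d)} (hθ : ‖θ‖ = 1)
    {r : ℝ} (hr : 0 ≤ r) :
    min (ENNReal.ofReal r) (radialFn A θ)
      = ENNReal.ofReal r - ENNReal.ofReal (radialDist (r • θ) A) := by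
  rcases eq_or_ne (radialFn A θ) ⊤ with htop | htop
  · rw [radialDist_smul_top hA hθ hr htop, htop, min_eq_left le_top]
    simp
  · have hform := radialDist_smul_eq hA hθ hr htop
    set c := (radialFn A θ).toReal with hc
    have hc0 : 0 ≤ c := ENNReal.toReal_nonneg
    have hρ : radialFn A θ = ENNReal.ofReal c := (ENNReal.ofReal_toReal htop).symm
    rcases le_or_gt r c with hrc | hrc
    · rw [hform, max_eq_left (by linarith), ENNReal.ofReal_zero, tsub_zero,
        min_eq_left (hρ ▸ ENNReal.ofReal_le_ofReal hrc)]
    · rw [hform, max_eq_right (by linarith), hρ,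
        min_eq_right (ENNReal.ofReal_le_ofReal hrc.le),
        ← ENNReal.ofReal_sub _ (by linarith)]
      norm_num

-- ## dAWr estimates
def ballSup {d : ℕ} (A B : Set (EuclideanSpace ℝ (Fin d))) (j : ℕ) : ℝ :=
  ⨆ x : Metric.closedBall (0 : EuclideanSpace ℝ (Fin d)) ((j : ℝ) + 1),
    |radialDist (x : EuclideanSpace ℝ (Fin d)) A - radialDist (x : EuclideanSpace ℝ (Fin d)) B|

lemma dAWr_eq (A B : Set (EuclideanSpace ℝ (Fin d))) :
    dAWr A B = ⨆ j : ℕ, min (1 / ((j : ℝ) + 1)) (ballSup A B j) := rfl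

instance ballNonempty (j : ℕ) :
    Nonempty (Metric.closedBall (0 : EuclideanSpace ℝ (Fin d)) ((j : ℝ) + 1)) :=
  ⟨⟨0, Metric.mem_closedBall_self (by positivity)⟩⟩

lemma abs_radialDist_sub_le (hA : IsStarBody A) (hB : IsStarBody B)
    {x : EuclideanSpace ℝ (Fin d)} {c : ℝ} (hx : ‖x‖ ≤ c) :
    |radialDist x A - radialDist x B| ≤ c := by
  have h1 := radialDist_nonneg hA x
  have h2 := radialDist_nonneg hB x
  have h3 := radialDist_le_norm (A := A) x
  have h4 := radialDist_le_norm (A := B) x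
  rw [abs_le]; constructor <;> linarith

lemma ballSup_bddAbove (hA : IsStarBody A) (hB : IsStarBody B) (j : ℕ) :
    BddAbove (Set.range fun x : Metric.closedBall (0 : EuclideanSpace ℝ (Fin d)) ((j : ℝ) + 1) =>
      |radialDist (x : EuclideanSpace ℝ (Fin d)) A - radialDist (x : EuclideanSpace ℝ (Fin d)) B|) := by
  refine ⟨(j : ℝ) + 1, ?_⟩
  rintro y ⟨x, rfl⟩
  exact abs_radialDist_sub_le hA hB (mem_closedBall_zero_iff.1 x.2)

lemma abs_le_ballSup (hA : IsStarBody A) (hB : IsStarBody B) {j : ℕ}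
    {x : EuclideanSpace ℝ (Fin d)} (hx : ‖x‖ ≤ (j : ℝ) + 1) :
    |radialDist x A - radialDist x B| ≤ ballSup A B j :=
  le_ciSup (ballSup_bddAbove hA hB j) (⟨x, mem_closedBall_zero_iff.2 hx⟩ :
    Metric.closedBall (0 : EuclideanSpace ℝ (Fin d)) ((j : ℝ) + 1))

lemma ballSup_nonneg (hA : IsStarBody A) (hB : IsStarBody B) (j : ℕ) :
    0 ≤ ballSup A B j := by
  have := abs_le_ballSup hA hB (j := j) (x := 0) (by simp; positivity)
  exact (abs_nonneg _).trans this

lemma min_ballSup_le_dAWr (hA : IsStarBody A) (hB : IsStarBody B) (j : ℕ) :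
    min (1 / ((j : ℝ) + 1)) (ballSup A B j) ≤ dAWr A B := by
  rw [dAWr_eq]
  refine le_ciSup (f := fun j : ℕ => min (1 / ((j : ℝ) + 1)) (ballSup A B j)) ⟨1, ?_⟩ j
  rintro y ⟨i, rfl⟩
  exact (min_le_left _ _).trans (by rw [div_le_one (by positivity)]; linarith [Nat.cast_nonneg (α := ℝ) i])

lemma abs_le_dAWr_of_lt (hA : IsStarBody A) (hB : IsStarBody B) {j : ℕ}
    (hd : dAWr A B < 1 / ((j : ℝ) + 1)) {x : EuclideanSpace ℝ (Fin d)}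
    (hx : ‖x‖ ≤ (j : ℝ) + 1) :
    |radialDist x A - radialDist x B| ≤ dAWr A B := by
  have hmin := min_ballSup_le_dAWr hA hB j
  have hS : ballSup A B j ≤ dAWr A B := by
    rcases le_or_gt (ballSup A B j) (1 / ((j : ℝ) + 1)) with h | h
    · rwa [min_eq_right h] at hmin
    · rw [min_eq_left h.le] at hmin; linarith
  exact (abs_le_ballSup hA hB hx).trans hS

lemma dAWr_nonneg (hA : IsStarBody A) (hB : IsStarBody B) : 0 ≤ dAWr A B := by
  refine le_trans ?_ (min_ballSup_le_dAWr hA hB 0)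
  exact le_min (by norm_num) (ballSup_nonneg hA hB 0)

lemma dAWr_le (hA : IsStarBody A) (hB : IsStarBody B) {J : ℕ} {ε : ℝ}
    (hJ : 1 / ((J : ℝ) + 1) ≤ ε)
    (h : ∀ x : EuclideanSpace ℝ (Fin d), ‖x‖ ≤ (J : ℝ) + 1 →
      |radialDist x A - radialDist x B| ≤ ε) :
    dAWr A B ≤ ε := by
  rw [dAWr_eq]
  refine ciSup_le fun j => ?_
  rcases le_or_gt (j : ℝ) (J : ℝ) with hj | hj
  · refine (min_le_right _ _).trans (ciSup_le fun x => ?_)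
    exact h x ((mem_closedBall_zero_iff.1 x.2).trans (by linarith))
  · refine (min_le_left _ _).trans (le_trans ?_ hJ)
    exact one_div_le_one_div_of_le (by positivity) (by linarith)

-- ## continuity of radialDist
lemma continuousOn_radialFn_comp
    (hρ : Continuous fun θ : Metric.sphere (0 : EuclideanSpace ℝ (Fin d)) 1 =>
      radialFn A (θ : EuclideanSpace ℝ (Fin d))) :
    ContinuousOn (fun x : EuclideanSpace ℝ (Fin d) => radialFn A (‖x‖⁻¹ • x))
      {x : EuclideanSpace ℝ (Fin d) | x ≠ 0} := by
  have hρ' : ContinuousOn (fun y : EuclideanSpace ℝ (Fin d) => radialFn A y)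
      (Metric.sphere (0 : EuclideanSpace ℝ (Fin d)) 1) :=
    continuousOn_iff_continuous_restrict.2 hρ
  have hmap : ContinuousOn (fun x : EuclideanSpace ℝ (Fin d) => ‖x‖⁻¹ • x)
      {x : EuclideanSpace ℝ (Fin d) | x ≠ 0} := by
    refine ContinuousOn.smul (f := fun x : EuclideanSpace ℝ (Fin d) => ‖x‖⁻¹) (g := fun x => x) ?_ continuous_id.continuousOn
    exact (continuous_norm.continuousOn).inv₀ fun x hx => norm_ne_zero_iff.2 hx
  exact hρ'.comp hmap fun x hx => mem_sphere_zero_iff_norm.2 (norm_unit hx)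

lemma continuous_radialDist (hA : IsStarBody A)
    (hρ : Continuous fun θ : Metric.sphere (0 : EuclideanSpace ℝ (Fin d)) 1 =>
      radialFn A (θ : EuclideanSpace ℝ (Fin d))) :
    Continuous fun x => radialDist x A := by
  rw [continuous_iff_continuousAt]
  intro x₀
  rcases eq_or_ne x₀ 0 with rfl | hx0
  · have : Filter.Tendsto (fun x => radialDist x A) (nhds 0) (nhds 0) :=
      squeeze_zero (radialDist_nonneg hA) radialDist_le_norm tendsto_norm_zero
    simpa [ContinuousAt, radialDist_zero hA.1] using this
  · have hopen : IsOpen {x : EuclideanSpace ℝ (Fin d) | x ≠ 0} := isOpen_compl_singleton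
    have hmem : {x : EuclideanSpace ℝ (Fin d) | x ≠ 0} ∈ nhds x₀ := hopen.mem_nhds hx0
    set h : EuclideanSpace ℝ (Fin d) → ℝ≥0∞ := fun x => radialFn A (‖x‖⁻¹ • x) with hh
    have hhx : ContinuousAt h x₀ :=
      (continuousOn_radialFn_comp hρ).continuousAt hmem
    rcases eq_or_ne (h x₀) ⊤ with htop | htop
    · -- locally the distance is 0
      have h1 : ∀ᶠ x in nhds x₀, ENNReal.ofReal (‖x₀‖ + 1) < h x := by
        refine hhx.eventually ?_
        rw [htop]
        exact IsOpen.eventually_mem isOpen_Ioi (by simp) |>.mono fun a ha => ha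
      have h2 : ∀ᶠ x in nhds x₀, ‖x‖ < ‖x₀‖ + 1 :=
        (continuous_norm.continuousAt (x := x₀)).eventually_lt continuousAt_const (lt_add_one _)
      have heq : (fun x => radialDist x A) =ᶠ[nhds x₀] fun _ => (0 : ℝ) := by
        filter_upwards [h1, h2] with x hx1 hx2
        rcases eq_or_ne x 0 with rfl | hx
        · exact radialDist_zero hA.1
        · refine radialDist_of_mem ?_
          have : ENNReal.ofReal ‖x‖ ≤ h x :=
            le_trans (ENNReal.ofReal_le_ofReal (by linarith)) hx1.le
          have := (mem_starBody_iff hA (norm_unit hx) (norm_nonneg x)).2 this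
          rwa [smul_norm_unit hx] at this
      exact continuousAt_const.congr heq.symm
    · have htoReal : ContinuousAt (fun x => (h x).toReal) x₀ :=
        (ENNReal.tendsto_toReal htop).comp hhx
      have hF : ContinuousAt (fun x => max 0 (‖x‖ - (h x).toReal)) x₀ :=
        continuousAt_const.max ((continuous_norm.continuousAt).sub htoReal)
      have hev : ∀ᶠ x in nhds x₀, h x ≠ ⊤ := hhx.eventually_ne htop
      have heq : (fun x => radialDist x A) =ᶠ[nhds x₀] fun x => max 0 (‖x‖ - (h x).toReal) := by
        filter_upwards [hev, hmem] with x hx1 hx2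
        have hx : x ≠ 0 := hx2
        have := radialDist_smul_eq hA (norm_unit hx) (norm_nonneg x) hx1
        rwa [smul_norm_unit hx] at this
      exact hF.congr heq.symm

-- ## continuity of radialFn from continuity of radialDist
lemma continuous_radialFn_of_radialDist (hB : IsStarBody B)
    (hd : Continuous fun x : EuclideanSpace ℝ (Fin d) => radialDist x B) :
    Continuous fun θ : Metric.sphere (0 : EuclideanSpace ℝ (Fin d)) 1 =>
      radialFn B (θ : EuclideanSpace ℝ (Fin d)) := by
  have hGc : ∀ r : ℝ, 0 ≤ r → Continuous (fun θ : Metric.sphere (0 : EuclideanSpace ℝ (Fin d)) 1 =>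
      min (ENNReal.ofReal r) (radialFn B (θ : EuclideanSpace ℝ (Fin d)))) := by
    intro r hr
    have hc : Continuous (fun θ : Metric.sphere (0 : EuclideanSpace ℝ (Fin d)) 1 =>
        ENNReal.ofReal r - ENNReal.ofReal (radialDist (r • (θ : EuclideanSpace ℝ (Fin d))) B)) :=
      (ENNReal.continuous_sub_left ENNReal.ofReal_ne_top).comp
        (ENNReal.continuous_ofReal.comp (hd.comp (continuous_subtype_val.const_smul r)))
    refine hc.congr fun θ => ?_
    exact (min_ofReal_radialFn hB (mem_sphere_zero_iff_norm.1 θ.2) hr).symm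
  rw [continuous_iff_continuousAt]
  intro θ₀
  rcases eq_or_ne (radialFn B (θ₀ : EuclideanSpace ℝ (Fin d))) ⊤ with htop | htop
  · rw [ContinuousAt, htop]
    refine ENNReal.tendsto_nhds_top fun n => ?_
    have hr : (0:ℝ) ≤ (n : ℝ) + 1 := by positivity
    have hlt : (n : ℝ≥0∞) < min (ENNReal.ofReal ((n:ℝ)+1)) (radialFn B (θ₀ : EuclideanSpace ℝ (Fin d))) := by
      rw [htop, min_eq_left le_top, ← ENNReal.ofReal_natCast n]
      exact ENNReal.ofReal_lt_ofReal_iff (by positivity) |>.2 (lt_add_one _)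
    have hev := ContinuousAt.eventually_lt continuousAt_const ((hGc _ hr).continuousAt) hlt
    exact hev.mono fun θ hθ => hθ.trans_le (min_le_right _ _)
  · set r : ℝ := (radialFn B (θ₀ : EuclideanSpace ℝ (Fin d))).toReal + 1 with hrdef
    have hr : 0 ≤ r := by positivity
    have hlt : min (ENNReal.ofReal r) (radialFn B (θ₀ : EuclideanSpace ℝ (Fin d)))
        < ENNReal.ofReal r := by
      rw [min_lt_iff]
      right
      rw [← ENNReal.ofReal_toReal htop]
      exact ENNReal.ofReal_lt_ofReal_iff (by positivity) |>.2 (lt_add_one _)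
    have hev := ContinuousAt.eventually_lt ((hGc r hr).continuousAt) continuousAt_const hlt
    refine ((hGc r hr).continuousAt).congr (hev.mono fun θ hθ => ?_)
    rcases min_cases (ENNReal.ofReal r) (radialFn B (θ : EuclideanSpace ℝ (Fin d))) with ⟨he, _⟩ | ⟨he, _⟩
    · rw [he] at hθ; exact absurd hθ (lt_irrefl _)
    · exact he

-- ## uniform limits on balls are continuous
lemma continuous_of_locUnif {F : ℕ → EuclideanSpace ℝ (Fin d) → ℝ}
    {G : EuclideanSpace ℝ (Fin d) → ℝ} (hF : ∀ n, Continuous (F n))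
    (hconv : ∀ j : ℕ, ∀ ε : ℝ, 0 < ε → ∃ N, ∀ n ≥ N, ∀ x : EuclideanSpace ℝ (Fin d),
      ‖x‖ ≤ (j : ℝ) + 1 → |F n x - G x| ≤ ε) :
    Continuous G := by
  rw [continuous_iff_continuousAt]
  intro x₀
  set j := ⌈‖x₀‖⌉₊ with hj
  have hTU : TendstoUniformlyOn F G Filter.atTop
      (Metric.closedBall (0 : EuclideanSpace ℝ (Fin d)) ((j : ℝ) + 1)) := by
    rw [Metric.tendstoUniformlyOn_iff]
    intro ε hε
    obtain ⟨N, hN⟩ := hconv j (ε / 2) (by positivity)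
    refine Filter.eventually_atTop.2 ⟨N, fun n hn x hx => ?_⟩
    have := hN n hn x (mem_closedBall_zero_iff.1 hx)
    rw [Real.dist_eq, abs_sub_comm]
    linarith
  have hCO : ContinuousOn G (Metric.closedBall (0 : EuclideanSpace ℝ (Fin d)) ((j : ℝ) + 1)) :=
    hTU.continuousOn (Filter.Frequently.of_forall fun n => (hF n).continuousOn)
  refine hCO.continuousAt (Metric.closedBall_mem_nhds_of_mem ?_)
  rw [Metric.mem_ball, dist_zero_right]
  have := Nat.le_ceil ‖x₀‖
  linarith

-- ## Part 1: closedness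
lemma part1 (A : ℕ → Set (EuclideanSpace ℝ (Fin d))) (B : Set (EuclideanSpace ℝ (Fin d)))
    (hA : ∀ n, IsStarBody (A n))
    (hρ : ∀ n, Continuous fun θ : Metric.sphere (0 : EuclideanSpace ℝ (Fin d)) 1 =>
      radialFn (A n) (θ : EuclideanSpace ℝ (Fin d)))
    (hB : IsStarBody B)
    (hconv : Filter.Tendsto (fun n => dAWr (A n) B) Filter.atTop (nhds 0)) :
    Continuous fun θ : Metric.sphere (0 : EuclideanSpace ℝ (Fin d)) 1 =>
      radialFn B (θ : EuclideanSpace ℝ (Fin d)) := by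
  have hFn : ∀ n, Continuous fun x => radialDist x (A n) :=
    fun n => continuous_radialDist (hA n) (hρ n)
  have hconv' : ∀ j : ℕ, ∀ ε : ℝ, 0 < ε → ∃ N, ∀ n ≥ N, ∀ x : EuclideanSpace ℝ (Fin d),
      ‖x‖ ≤ (j : ℝ) + 1 → |radialDist x (A n) - radialDist x B| ≤ ε := by
    intro j ε hε
    have hδ : (0:ℝ) < min ε (1 / ((j : ℝ) + 1)) := lt_min hε (by positivity)
    obtain ⟨N, hN⟩ := (Metric.tendsto_atTop.1 hconv) _ hδ
    refine ⟨N, fun n hn x hx => ?_⟩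
    have hd : dAWr (A n) B < min ε (1 / ((j : ℝ) + 1)) := by
      have := hN n hn
      rw [Real.dist_eq, sub_zero] at this
      exact (le_abs_self _).trans_lt this
    have h1 : dAWr (A n) B < 1 / ((j : ℝ) + 1) := hd.trans_le (min_le_right _ _)
    have h2 : dAWr (A n) B < ε := hd.trans_le (min_le_left _ _)
    exact (abs_le_dAWr_of_lt (hA n) hB h1 hx).trans h2.le
  exact continuous_radialFn_of_radialDist hB (continuous_of_locUnif hFn hconv')

-- ## Part 2: completeness
lemma part2 (u : ℕ → Set (EuclideanSpace ℝ (Fin d)))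
    (h1 : ∀ n, IsStarBody (u n) ∧
      Continuous fun θ : Metric.sphere (0 : EuclideanSpace ℝ (Fin d)) 1 =>
        radialFn (u n) (θ : EuclideanSpace ℝ (Fin d)))
    (h2 : ∀ ε : ℝ, 0 < ε → ∃ N : ℕ, ∀ m ≥ N, ∀ n ≥ N, dAWr (u m) (u n) < ε) :
    ∃ B : Set (EuclideanSpace ℝ (Fin d)), IsStarBody B ∧
      (Continuous fun θ : Metric.sphere (0 : EuclideanSpace ℝ (Fin d)) 1 =>
        radialFn B (θ : EuclideanSpace ℝ (Fin d))) ∧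
      Filter.Tendsto (fun n => dAWr (u n) B) Filter.atTop (nhds 0) := by
  -- uniform Cauchy on balls
  have key : ∀ j : ℕ, ∀ ε : ℝ, 0 < ε → ∃ N, ∀ m ≥ N, ∀ n ≥ N,
      ∀ x : EuclideanSpace ℝ (Fin d), ‖x‖ ≤ (j : ℝ) + 1 →
      |radialDist x (u m) - radialDist x (u n)| ≤ ε := by
    intro j ε hε
    obtain ⟨N, hN⟩ := h2 (min ε (1 / ((j : ℝ) + 1))) (lt_min hε (by positivity))
    refine ⟨N, fun m hm n hn x hx => ?_⟩
    have hd := hN m hm n hn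
    have hlt : dAWr (u m) (u n) < 1 / ((j : ℝ) + 1) := hd.trans_le (min_le_right _ _)
    exact (abs_le_dAWr_of_lt (h1 m).1 (h1 n).1 hlt hx).trans
      (hd.trans_le (min_le_left _ _)).le
  -- pointwise limit f
  have hcauchy : ∀ x : EuclideanSpace ℝ (Fin d), ∃ l,
      Filter.Tendsto (fun n => radialDist x (u n)) Filter.atTop (nhds l) := by
    intro x
    refine cauchySeq_tendsto_of_complete (Metric.cauchySeq_iff.2 fun ε hε => ?_)
    obtain ⟨N, hN⟩ := key ⌈‖x‖⌉₊ (ε / 2) (by positivity)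
    refine ⟨N, fun m hm n hn => ?_⟩
    have hx : ‖x‖ ≤ (⌈‖x‖⌉₊ : ℝ) + 1 := by have := Nat.le_ceil ‖x‖; linarith
    have := hN m hm n hn x hx
    rw [Real.dist_eq]
    linarith
  set f : EuclideanSpace ℝ (Fin d) → ℝ := fun x => (hcauchy x).choose with hfdef
  have hf : ∀ x, Filter.Tendsto (fun n => radialDist x (u n)) Filter.atTop (nhds (f x)) :=
    fun x => (hcauchy x).choose_spec
  -- uniform approximation on balls
  have happrox : ∀ j : ℕ, ∀ ε : ℝ, 0 < ε → ∃ N, ∀ n ≥ N,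
      ∀ x : EuclideanSpace ℝ (Fin d), ‖x‖ ≤ (j : ℝ) + 1 →
      |radialDist x (u n) - f x| ≤ ε := by
    intro j ε hε
    obtain ⟨N, hN⟩ := key j (ε / 2) (by positivity)
    refine ⟨N, fun n hn x hx => ?_⟩
    have ht : Filter.Tendsto (fun m => |radialDist x (u n) - radialDist x (u m)|)
        Filter.atTop (nhds |radialDist x (u n) - f x|) :=
      (tendsto_const_nhds.sub (hf x)).abs
    have hev : ∀ᶠ m in Filter.atTop, |radialDist x (u n) - radialDist x (u m)| ≤ ε / 2 :=
      Filter.eventually_atTop.2 ⟨N, fun m hm => hN n hn m hm x hx⟩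
    have := le_of_tendsto ht hev
    linarith
  -- basic facts about f
  have hf0 : f 0 = 0 := by
    refine tendsto_nhds_unique (hf 0) ?_
    have : (fun n => radialDist (0 : EuclideanSpace ℝ (Fin d)) (u n)) = fun _ => (0:ℝ) :=
      funext fun n => radialDist_zero (h1 n).1.1
    rw [this]; exact tendsto_const_nhds
  have hfnn : ∀ x, 0 ≤ f x := fun x =>
    ge_of_tendsto' (hf x) fun n => radialDist_nonneg (h1 n).1 x
  -- ray structure of f
  have hray : ∀ θ : EuclideanSpace ℝ (Fin d), ‖θ‖ = 1 →
      (∀ r : ℝ, 0 ≤ r → f (r • θ) = 0) ∨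
      (∃ c : ℝ, 0 ≤ c ∧ ∀ r : ℝ, 0 ≤ r → f (r • θ) = max 0 (r - c)) := by
    intro θ hθ
    by_cases hz : ∀ r : ℝ, 0 ≤ r → f (r • θ) = 0
    · exact Or.inl hz
    right
    push_neg at hz
    obtain ⟨r₀, hr₀, hne⟩ := hz
    have hpos : 0 < f (r₀ • θ) := lt_of_le_of_ne (hfnn _) (Ne.symm hne)
    refine ⟨r₀ - f (r₀ • θ), ?_, ?_⟩ <;>
    · -- shared eventual description
      have hev : ∀ᶠ n in Filter.atTop, radialFn (u n) θ ≠ ⊤ ∧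
          (radialFn (u n) θ).toReal = r₀ - radialDist (r₀ • θ) (u n) := by
        have hev0 : ∀ᶠ n in Filter.atTop, 0 < radialDist (r₀ • θ) (u n) :=
          (hf (r₀ • θ)).eventually (lt_mem_nhds hpos)
        filter_upwards [hev0] with n hn
        have htop : radialFn (u n) θ ≠ ⊤ := by
          intro h
          rw [radialDist_smul_top (h1 n).1 hθ hr₀ h] at hn
          exact lt_irrefl _ hn
        refine ⟨htop, ?_⟩
        have heq := radialDist_smul_eq (h1 n).1 hθ hr₀ htop
        set t := (radialFn (u n) θ).toReal with htdef
        have hmax : max 0 (r₀ - t) = r₀ - t := by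
          rcases le_or_gt (r₀ - t) 0 with h | h
          · rw [heq, max_eq_left h] at hn; exact absurd hn (lt_irrefl 0)
          · exact max_eq_right h.le
        rw [heq, hmax]
        ring
      have hγ : Filter.Tendsto (fun n => r₀ - radialDist (r₀ • θ) (u n)) Filter.atTop
          (nhds (r₀ - f (r₀ • θ))) := tendsto_const_nhds.sub (hf _)
      first
      | · -- nonnegativity of c
          refine ge_of_tendsto hγ (hev.mono fun n hn => ?_)
          rw [← hn.2]
          exact ENNReal.toReal_nonneg
      | · -- formula for f on the ray
          intro r hr
          have h1' : ∀ᶠ n in Filter.atTop, radialDist (r • θ) (u n)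
              = max 0 (r - (r₀ - radialDist (r₀ • θ) (u n))) := by
            filter_upwards [hev] with n hn
            rw [radialDist_smul_eq (h1 n).1 hθ hr hn.1, hn.2]
          have h2' : Filter.Tendsto (fun n => max 0 (r - (r₀ - radialDist (r₀ • θ) (u n))))
              Filter.atTop (nhds (max 0 (r - (r₀ - f (r₀ • θ))))) :=
            tendsto_const_nhds.max (tendsto_const_nhds.sub hγ)
          exact tendsto_nhds_unique (hf (r • θ))
            (h2'.congr' (h1'.mono fun n hn => hn.symm))
  -- the limit body
  set B : Set (EuclideanSpace ℝ (Fin d)) := {x | f x = 0} with hBdef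
  have hmemB : ∀ x, x ∈ B ↔ f x = 0 := fun x => Iff.rfl
  -- description of the radial function of B
  have hρB : ∀ θ : EuclideanSpace ℝ (Fin d), ‖θ‖ = 1 →
      (radialFn B θ = ⊤ ∧ ∀ r : ℝ, 0 ≤ r → f (r • θ) = 0) ∨
      (∃ c : ℝ, 0 ≤ c ∧ radialFn B θ = ENNReal.ofReal c ∧
        ∀ r : ℝ, 0 ≤ r → f (r • θ) = max 0 (r - c)) := by
    intro θ hθ
    rcases hray θ hθ with hcase | ⟨c, hc, hcase⟩
    · left
      refine ⟨?_, hcase⟩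
      rw [radialFn]
      refine sSup_eq_top.2 fun b hb => ?_
      refine ⟨ENNReal.ofReal (b.toReal + 1), ⟨b.toReal + 1, ⟨by positivity, ?_⟩, rfl⟩, ?_⟩
      · exact hcase _ (by positivity)
      · calc b = ENNReal.ofReal b.toReal := (ENNReal.ofReal_toReal hb.ne).symm
          _ < ENNReal.ofReal (b.toReal + 1) :=
            (ENNReal.ofReal_lt_ofReal_iff (by positivity)).2 (lt_add_one _)
    · right
      refine ⟨c, hc, ?_, hcase⟩
      rw [radialFn]
      apply le_antisymm
      · refine sSup_le ?_
        rintro e ⟨r, ⟨hr0, hrB⟩, rfl⟩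
        have : max 0 (r - c) = 0 := by rw [← hcase r hr0]; exact hrB
        have hrc : r ≤ c := by
          by_contra hcon
          rw [max_eq_right (by linarith)] at this
          linarith [not_le.1 hcon]
        exact ENNReal.ofReal_le_ofReal hrc
      · refine le_sSup ⟨c, ⟨hc, ?_⟩, rfl⟩
        show f (c • θ) = 0
        rw [hcase c hc, sub_self, max_self]
  -- B is a star body
  have hBbody : IsStarBody B := by
    constructor
    · constructor
      · exact ⟨0, hf0⟩
      · intro a ha t ht0 ht1
        rcases eq_or_ne a 0 with rfl | ha0
        · rwa [smul_zero]
        have hθ := norm_unit ha0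
        have hasmul := smul_norm_unit ha0
        have hta : t • a = (t * ‖a‖) • (‖a‖⁻¹ • a) := by
          rw [mul_smul, hasmul]
        have htn : 0 ≤ t * ‖a‖ := mul_nonneg ht0 (norm_nonneg a)
        rcases hray _ hθ with hcase | ⟨c, hc, hcase⟩
        · show f (t • a) = 0
          rw [hta]; exact hcase _ htn
        · have hfa : f ((‖a‖) • (‖a‖⁻¹ • a)) = 0 := by rw [hasmul]; exact ha
          rw [hcase _ (norm_nonneg a)] at hfa
          have hac : ‖a‖ ≤ c := by
            by_contra hcon
            rw [max_eq_right (by linarith [not_le.1 hcon])] at hfa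
            linarith [not_le.1 hcon]
          show f (t • a) = 0
          rw [hta, hcase _ htn, max_eq_left]
          have : t * ‖a‖ ≤ ‖a‖ := by nlinarith [norm_nonneg a]
          linarith
    · intro θ hθ htop
      rcases hρB θ hθ with ⟨h, _⟩ | ⟨c, hc, hcc, hcase⟩
      · exact absurd h htop
      · rw [hcc, ENNReal.toReal_ofReal hc]
        show f (c • θ) = 0
        rw [hcase c hc, sub_self, max_self]
  -- the radial distance to B is f
  have hdist : ∀ x, radialDist x B = f x := by
    intro x
    by_cases hx : x ∈ B
    · rw [radialDist_of_mem hx, (hmemB x).1 hx]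
    · have hfx : f x ≠ 0 := fun h => hx ((hmemB x).2 h)
      have hfpos : 0 < f x := lt_of_le_of_ne (hfnn x) (Ne.symm hfx)
      have hx0 : x ≠ 0 := by rintro rfl; exact hfx hf0
      have hθ := norm_unit hx0
      have hxs := smul_norm_unit hx0
      rcases hρB _ hθ with ⟨_, hcase⟩ | ⟨c, hc, hcc, hcase⟩
      · exfalso
        have := hcase ‖x‖ (norm_nonneg x)
        rw [hxs] at this
        exact hfx this
      · simp only [radialDist, hx, if_false]
        rw [hcc, ENNReal.toReal_ofReal hc]
        have hfx2 : f x = max 0 (‖x‖ - c) := by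
          have := hcase ‖x‖ (norm_nonneg x); rwa [hxs] at this
        rw [hfx2] at hfpos ⊢
        rcases le_or_gt (‖x‖ - c) 0 with h | h
        · rw [max_eq_left h] at hfpos; exact absurd hfpos (lt_irrefl 0)
        · rw [max_eq_right h.le]
  -- continuity of f, hence of the radial function of B
  have hfc : Continuous f :=
    continuous_of_locUnif (fun n => continuous_radialDist (h1 n).1 (h1 n).2) happrox
  have hdB : Continuous fun x => radialDist x B := by
    have : (fun x => radialDist x B) = f := funext hdist
    rw [this]; exact hfc
  refine ⟨B, hBbody, continuous_radialFn_of_radialDist hBbody hdB, ?_⟩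
  -- convergence in dAWr
  rw [Metric.tendsto_atTop]
  intro ε hε
  obtain ⟨J, hJ⟩ := exists_nat_one_div_lt (half_pos hε)
  obtain ⟨N, hN⟩ := happrox J (ε / 2) (half_pos hε)
  refine ⟨N, fun n hn => ?_⟩
  have hle : dAWr (u n) B ≤ ε / 2 := by
    refine dAWr_le (J := J) (h1 n).1 hBbody ?_ fun x hx => ?_
    · exact_mod_cast hJ.le
    · rw [hdist x]
      exact hN n hn x hx
  rw [Real.dist_eq, sub_zero, abs_of_nonneg (dAWr_nonneg (h1 n).1 hBbody)]
  linarith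

end Aux

theorem S1_closed_and_complete_in_dAWr {d : ℕ} :
    (∀ (A : ℕ → Set (EuclideanSpace ℝ (Fin d))) (B : Set (EuclideanSpace ℝ (Fin d))),
      (∀ n, IsStarBody (A n)) →
      (∀ n, Continuous fun θ : Metric.sphere (0 : EuclideanSpace ℝ (Fin d)) 1 =>
        radialFn (A n) (θ : EuclideanSpace ℝ (Fin d))) →
      IsStarBody B →
      Filter.Tendsto (fun n => dAWr (A n) B) Filter.atTop (nhds 0) →
      Continuous fun θ : Metric.sphere (0 : EuclideanSpace ℝ (Fin d)) 1 =>
        radialFn B (θ : EuclideanSpace ℝ (Fin d))) ∧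
    (∀ u : ℕ → Set (EuclideanSpace ℝ (Fin d)),
      (∀ n, IsStarBody (u n) ∧
        Continuous fun θ : Metric.sphere (0 : EuclideanSpace ℝ (Fin d)) 1 =>
          radialFn (u n) (θ : EuclideanSpace ℝ (Fin d))) →
      (∀ ε : ℝ, 0 < ε → ∃ N : ℕ, ∀ m ≥ N, ∀ n ≥ N, dAWr (u m) (u n) < ε) →
      ∃ B : Set (EuclideanSpace ℝ (Fin d)), IsStarBody B ∧
        (Continuous fun θ : Metric.sphere (0 : EuclideanSpace ℝ (Fin d)) 1 =>
          radialFn B (θ : EuclideanSpace ℝ (Fin d))) ∧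
        Filter.Tendsto (fun n => dAWr (u n) B) Filter.atTop (nhds 0)) :=
  ⟨part1, part2⟩
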